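/- There exists a constant c > 0 such that for all real X, Y with 3/2 ≤ X ≤ Y, one has ∫_0^1 |f(α)|² dα ≤ c·X·Y·log X. -/

import Mathlib

open Real

/-- The exponential sum `f(α) = ∑_{1 ≤ |x| ≤ X} ∑_{1 ≤ |y| ≤ Y} e(αxy)`. -/
noncomputable def f (X Y α : ℝ) : ℂ :=
  ∑ x ∈ Finset.Icc (-⌊X⌋) ⌊X⌋, ∑ y ∈ Finset.Icc (-⌊Y⌋) ⌊Y⌋,
    if x ≠ 0 ∧ y ≠ 0 then Complex.exp (2 * Real.pi * Complex.I * (α * x * y : ℝ)) else 0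

noncomputable def S (a : ℤ) : Finset ℤ := (Finset.Icc (-a) a).filter (· ≠ 0)

noncomputable def EE (n : ℤ) (α : ℝ) : ℂ := Complex.exp (2 * π * Complex.I * α * n)

lemma f_eq (X Y α : ℝ) : f X Y α = ∑ x ∈ S ⌊X⌋, ∑ y ∈ S ⌊Y⌋, EE (x * y) α := by
  unfold f S EE
  rw [Finset.sum_filter]
  refine Finset.sum_congr rfl fun x _ => ?_
  by_cases hx : x = 0
  · simp [hx]
  · rw [if_pos hx, Finset.sum_filter]
    refine Finset.sum_congr rfl fun y _ => ?_
    by_cases hy : y = 0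
    · simp [hy]
    · rw [if_pos (⟨hx, hy⟩ : x ≠ 0 ∧ y ≠ 0), if_pos hy]
      push_cast
      ring_nf

lemma conj_EE (n : ℤ) (α : ℝ) : (starRingEnd ℂ) (EE n α) = EE (-n) α := by
  unfold EE
  rw [← Complex.exp_conj]
  congr 1
  simp only [map_mul, Complex.conj_I, Complex.conj_ofReal, map_ofNat, map_intCast]
  push_cast
  ring

lemma EE_mul (m n : ℤ) (α : ℝ) : EE m α * EE n α = EE (m + n) α := by
  unfold EE
  rw [← Complex.exp_add]
  congr 1
  push_cast
  ring

lemma sq_abs_f (X Y α : ℝ) :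
    ‖f X Y α‖ ^ 2 =
      ∑ p ∈ (S ⌊X⌋) ×ˢ (S ⌊Y⌋), ∑ q ∈ (S ⌊X⌋) ×ˢ (S ⌊Y⌋),
        (EE (p.1 * p.2 - q.1 * q.2) α).re := by
  have hf : f X Y α = ∑ p ∈ (S ⌊X⌋) ×ˢ (S ⌊Y⌋), EE (p.1 * p.2) α := by
    rw [f_eq, Finset.sum_product]
  have h2 : ∀ z : ℂ, ‖z‖ ^ 2 = (z * (starRingEnd ℂ) z).re := fun z => by
    rw [Complex.mul_conj, Complex.ofReal_re, Complex.sq_norm]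
  rw [h2, hf, map_sum, Finset.sum_mul_sum, Complex.re_sum]
  refine Finset.sum_congr rfl fun p _ => ?_
  rw [Complex.re_sum]
  refine Finset.sum_congr rfl fun q _ => ?_
  rw [conj_EE, EE_mul, sub_eq_add_neg]

lemma EE_re_intervalIntegrable (n : ℤ) :
    IntervalIntegrable (fun α => (EE n α).re) MeasureTheory.volume 0 1 := by
  exact (Complex.continuous_re.comp (by unfold EE; fun_prop)).intervalIntegrable 0 1

lemma EE_cont (n : ℤ) : Continuous (EE n) := by
  unfold EE; fun_prop

lemma EE_integral (n : ℤ) : ∫ α in (0:ℝ)..1, EE n α = if n = 0 then 1 else 0 := by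
  unfold EE
  split
  · next h => simp [h]
  · next h =>
    have hc : (2 * (π:ℂ) * Complex.I * n) ≠ 0 := by
      simp [Real.pi_ne_zero, Complex.I_ne_zero, h]
    have : ∀ α : ℝ, Complex.exp (2 * π * Complex.I * α * n)
        = Complex.exp ((2 * π * Complex.I * n) * α) := by
      intro α; ring_nf
    simp_rw [this]
    rw [integral_exp_mul_complex hc]
    have : (2 * (π:ℂ) * Complex.I * n) * (1:ℝ) = n * (2 * π * Complex.I) := by
      push_cast; ring
    rw [this, Complex.exp_int_mul_two_pi_mul_I]
    simp

lemma EE_re_integral (n : ℤ) :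
    ∫ α in (0:ℝ)..1, (EE n α).re = if n = 0 then (1:ℝ) else 0 := by
  have h1 : IntervalIntegrable (EE n) MeasureTheory.volume 0 1 :=
    (EE_cont n).intervalIntegrable 0 1
  rw [intervalIntegral.integral_of_le (by norm_num : (0:ℝ) ≤ 1)] at *
  simp_rw [← RCLike.re_to_complex]
  rw [integral_re]
  · rw [← intervalIntegral.integral_of_le (by norm_num : (0:ℝ) ≤ 1), EE_integral]
    split <;> simp
  · exact (EE_cont n).integrableOn_Ioc

lemma integral_sq_abs (X Y : ℝ) :
    ∫ α in (0:ℝ)..1, ‖f X Y α‖ ^ 2 =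
      ∑ p ∈ (S ⌊X⌋) ×ˢ (S ⌊Y⌋), ∑ q ∈ (S ⌊X⌋) ×ˢ (S ⌊Y⌋),
        (if p.1 * p.2 = q.1 * q.2 then (1:ℝ) else 0) := by
  simp_rw [sq_abs_f]
  rw [intervalIntegral.integral_finset_sum]
  · refine Finset.sum_congr rfl fun p _ => ?_
    rw [intervalIntegral.integral_finset_sum]
    · refine Finset.sum_congr rfl fun q _ => ?_
      rw [EE_re_integral]
      simp [sub_eq_zero]
    · exact fun q _ => EE_re_intervalIntegrable _
  · intro p _
    apply Continuous.intervalIntegrable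
    exact continuous_finset_sum _ fun q _ =>
      Complex.continuous_re.comp (by unfold EE; fun_prop)



-- card of nonzero multiples of m in [-b,b]
lemma mult_card_le (b : ℤ) (m : ℤ) (hm : 0 < m) (hb : 0 ≤ b) :
    (((Finset.Icc (-b) b).filter (fun y => y ≠ 0 ∧ m ∣ y)).card : ℤ) ≤ 2 * (b / m) := by
  set c := b / m with hc
  have hc0 : 0 ≤ c := Int.ediv_nonneg hb hm.le
  have h1 : ((Finset.Icc (-b) b).filter (fun y => y ≠ 0 ∧ m ∣ y)).card ≤
      ((Finset.Icc (-c) c).erase 0).card := by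
    apply Finset.card_le_card_of_injOn (fun y => y / m)
    · intro y hy
      simp only [Finset.mem_coe, Finset.mem_filter, Finset.mem_Icc] at hy
      obtain ⟨⟨hy1, hy2⟩, hy0, k, hk⟩ := hy
      simp only [Finset.mem_coe, Finset.mem_erase, Finset.mem_Icc]
      subst hk
      rw [Int.mul_ediv_cancel_left _ hm.ne']
      refine ⟨by rintro rfl; simp at hy0, ?_, ?_⟩
      · rw [neg_le, hc, Int.le_ediv_iff_mul_le hm]; nlinarith
      · rw [hc, Int.le_ediv_iff_mul_le hm]; nlinarith
    · intro y hy z hz hyz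
      simp only [Finset.coe_filter, Set.mem_setOf_eq] at hy hz
      have := hy.2.2; have := hz.2.2
      simp only at hyz
      rw [← Int.ediv_mul_cancel hy.2.2, ← Int.ediv_mul_cancel hz.2.2, hyz]
  have h2 : (((Finset.Icc (-c) c).erase 0).card : ℤ) = 2 * c := by
    rw [Finset.card_erase_of_mem (by simp [hc0]), Int.card_Icc]
    omega
  calc ((((Finset.Icc (-b) b)).filter (fun y => y ≠ 0 ∧ m ∣ y)).card : ℤ)
      ≤ (((Finset.Icc (-c) c).erase 0).card : ℤ) := by exact_mod_cast h1
    _ = 2 * c := h2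

lemma sol_card_le (b : ℤ) (hb : 1 ≤ b) (x x' : ℤ) (hx : x ≠ 0) (hx' : x' ≠ 0) :
    ((((S b) ×ˢ (S b)).filter (fun p => x * p.1 = x' * p.2)).card : ℝ)
      ≤ 2 * b * (Int.gcd x x') / x'.natAbs := by
  set g : ℤ := ((Int.gcd x x' : ℕ) : ℤ) with hgdef
  have hg0 : 0 < g := by
    rw [hgdef]
    exact_mod_cast Int.gcd_pos_of_ne_zero_left x' hx
  have hgx : g ∣ x := Int.gcd_dvd_left x x'
  have hgx' : g ∣ x' := Int.gcd_dvd_right x x'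
  set m : ℤ := x' / g with hmdef
  have hmx' : m * g = x' := Int.ediv_mul_cancel hgx'
  have hm0 : m ≠ 0 := by
    intro h0
    rw [h0, zero_mul] at hmx'
    exact hx' hmx'.symm
  -- solutions inject into multiples of |m|
  have hinj : (((S b) ×ˢ (S b)).filter (fun p => x * p.1 = x' * p.2)).card ≤
      ((Finset.Icc (-b) b).filter (fun y => y ≠ 0 ∧ |m| ∣ y)).card := by
    apply Finset.card_le_card_of_injOn (fun p => p.1)
    · intro p hp
      simp only [Finset.mem_coe, Finset.mem_filter, Finset.mem_product, S, Finset.mem_filter] at hp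
      obtain ⟨⟨⟨h1, h2⟩, _⟩, heq⟩ := hp
      simp only [Finset.mem_coe, Finset.mem_filter]
      refine ⟨h1, h2, ?_⟩
      rw [abs_dvd]
      -- m ∣ p.1
      have hcop : Int.gcd (x' / g) (x / g) = 1 := by
        rw [Int.gcd_comm]
        exact Int.gcd_div_gcd_div_gcd (by rw [hgdef] at hg0; exact_mod_cast hg0)
      have hxg : (x / g) * g = x := Int.ediv_mul_cancel hgx
      have hdvd : m ∣ (x / g) * p.1 := by
        refine ⟨p.2, ?_⟩
        have : g * ((x/g) * p.1) = g * (m * p.2) := by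
          rw [← mul_assoc, ← mul_assoc, mul_comm g (x/g), mul_comm g m, hxg, hmx', heq]
        exact mul_left_cancel₀ (by omega) this
      exact (Int.isCoprime_iff_gcd_eq_one.2 hcop).dvd_of_dvd_mul_left hdvd
    · intro p hp q hq hpq
      simp only [Finset.coe_filter, Set.mem_setOf_eq] at hp hq
      simp only at hpq
      have h1 : x' * p.2 = x' * q.2 := by rw [← hp.2, ← hq.2, hpq]
      have := mul_left_cancel₀ hx' h1
      exact Prod.ext hpq this
  have habs : (|m| : ℤ) = ((x'.natAbs / Int.gcd x x' : ℕ) : ℤ) := by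
    rw [Int.abs_eq_natAbs, hmdef, Int.natAbs_ediv_of_dvd hgx', hgdef]
    simp
  have h2 := mult_card_le b |m| (by positivity) (by omega)
  have hgn : Int.gcd x x' ≠ 0 := (Int.gcd_pos_of_ne_zero_left x' hx).ne'
  have hxn : x'.natAbs ≠ 0 := Int.natAbs_ne_zero.2 hx'
  have hdvdn : Int.gcd x x' ∣ x'.natAbs := Nat.gcd_dvd_right _ _
  have hmabs : ((|m| : ℤ) : ℝ) = (x'.natAbs : ℝ) / (Int.gcd x x' : ℝ) := by
    rw [habs, Int.cast_natCast]
    exact Nat.cast_div hdvdn (by exact_mod_cast hgn)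
  have hmpos : (0:ℝ) < ((|m| : ℤ) : ℝ) := by
    have : (0:ℤ) < |m| := by positivity
    exact_mod_cast this
  calc ((((S b) ×ˢ (S b)).filter (fun p => x * p.1 = x' * p.2)).card : ℝ)
      ≤ (((Finset.Icc (-b) b).filter (fun y => y ≠ 0 ∧ |m| ∣ y)).card : ℝ) := by
        exact_mod_cast hinj
    _ ≤ ((2 * (b / |m|) : ℤ) : ℝ) := by exact_mod_cast h2
    _ ≤ 2 * ((b:ℝ) / ((|m| : ℤ) : ℝ)) := by
        have h3 : ((b / |m| : ℤ) : ℝ) ≤ (b:ℝ) / ((|m| : ℤ) : ℝ) := by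
          rw [le_div_iff₀ hmpos]
          exact_mod_cast Int.ediv_mul_le b (by positivity : |m| ≠ 0)
        calc ((2 * (b / |m|) : ℤ) : ℝ) = 2 * ((b / |m| : ℤ) : ℝ) := by push_cast; ring
          _ ≤ _ := by linarith
    _ = 2 * b * (Int.gcd x x') / x'.natAbs := by
        rw [hmabs]
        field_simp

lemma sol_card_symm (b : ℤ) (x x' : ℤ) :
    (((S b) ×ˢ (S b)).filter (fun p => x * p.1 = x' * p.2)).card
      = (((S b) ×ˢ (S b)).filter (fun p => x' * p.1 = x * p.2)).card := by
  apply Finset.card_bij (fun p _ => p.swap)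
  · intro p hp
    simp only [Finset.mem_filter, Finset.mem_product] at hp ⊢
    exact ⟨⟨hp.1.2, hp.1.1⟩, hp.2.symm⟩
  · intro p _ q _ h
    exact Prod.swap_injective h
  · intro q hq
    refine ⟨q.swap, ?_, by simp⟩
    simp only [Finset.mem_filter, Finset.mem_product] at hq ⊢
    exact ⟨⟨hq.1.2, hq.1.1⟩, hq.2.symm⟩

lemma sol_card_le_max (b : ℤ) (hb : 1 ≤ b) (x x' : ℤ) (hx : x ≠ 0) (hx' : x' ≠ 0) :
    ((((S b) ×ˢ (S b)).filter (fun p => x * p.1 = x' * p.2)).card : ℝ)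
      ≤ 2 * b * (Int.gcd x x') / (max x.natAbs x'.natAbs : ℕ) := by
  rcases le_total (x.natAbs : ℕ) x'.natAbs with h | h
  · rw [max_eq_right h]
    exact sol_card_le b hb x x' hx hx'
  · rw [max_eq_left h, sol_card_symm]
    rw [Int.gcd_comm]
    exact sol_card_le b hb x' x hx' hx

lemma sum_S_eq (a : ℤ) (t : ℤ → ℝ) (ht : ∀ x, t (-x) = t x) :
    ∑ x ∈ S a, t x = 2 * ∑ x ∈ Finset.Icc 1 a, t x := by
  have hsplit : S a = Finset.Icc (-a) (-1) ∪ Finset.Icc 1 a := by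
    ext x
    simp only [S, Finset.mem_filter, Finset.mem_Icc, Finset.mem_union, ne_eq]
    omega
  have hdisj : Disjoint (Finset.Icc (-a) (-1)) (Finset.Icc (1:ℤ) a) := by
    rw [Finset.disjoint_left]
    intro x hx hx'
    simp only [Finset.mem_Icc] at hx hx'
    omega
  rw [hsplit, Finset.sum_union hdisj]
  have heq : ∑ x ∈ Finset.Icc (-a) (-1), t x = ∑ x ∈ Finset.Icc 1 a, t x := by
    apply Finset.sum_nbij' (i := fun x => -x) (j := fun x => -x)
    · intro x hx; simp only [Finset.mem_Icc] at *; omega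
    · intro x hx; simp only [Finset.mem_Icc] at *; omega
    · intro x _; ring
    · intro x _; ring
    · intro x _; exact (ht x).symm
  rw [heq]; ring

lemma sum_Icc_int_nat (a : ℤ) (t : ℤ → ℝ) :
    ∑ x ∈ Finset.Icc (1:ℤ) a, t x = ∑ u ∈ Finset.Icc 1 a.toNat, t (u : ℤ) := by
  refine Finset.sum_nbij' (fun x => x.toNat) (fun u => (u : ℤ)) ?_ ?_ ?_ ?_ ?_
  · intro x hx; simp only [Finset.mem_Icc] at *; omega
  · intro u hu; simp only [Finset.mem_Icc] at *; omega
  · intro x hx; simp only [Finset.mem_Icc] at hx; omega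
  · intro u hu; simp only [Finset.mem_Icc] at hu; omega
  · intro x hx; simp only [Finset.mem_Icc] at hx; congr 1; omega

lemma gcd_sum_le (v : ℕ) (hv : 1 ≤ v) :
    ∑ u ∈ Finset.Icc 1 v, Nat.gcd u v ≤ v * v.divisors.card := by
  have h1 : ∑ u ∈ Finset.Icc 1 v, Nat.gcd u v
      = ∑ u ∈ Finset.Icc 1 v, ∑ d ∈ v.divisors, if Nat.gcd u v = d then d else 0 := by
    refine Finset.sum_congr rfl fun u hu => ?_
    rw [Finset.sum_ite_eq v.divisors (Nat.gcd u v) (fun d => d)]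
    rw [if_pos (Nat.mem_divisors.2 ⟨Nat.gcd_dvd_right u v, by omega⟩)]
  rw [h1, Finset.sum_comm]
  have h2 : ∀ d ∈ v.divisors, (∑ u ∈ Finset.Icc 1 v, if Nat.gcd u v = d then d else 0) ≤ v := by
    intro d hd
    calc (∑ u ∈ Finset.Icc 1 v, if Nat.gcd u v = d then d else 0)
        ≤ ∑ u ∈ Finset.Icc 1 v, if d ∣ u then d else 0 := by
          refine Finset.sum_le_sum fun u hu => ?_
          by_cases h : Nat.gcd u v = d
          · rw [if_pos h, if_pos (h ▸ Nat.gcd_dvd_left u v)]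
          · rw [if_neg h]; exact Nat.zero_le _
      _ = ((Finset.Icc 1 v).filter (fun u => d ∣ u)).card * d := by
          rw [← Finset.sum_filter, Finset.sum_const, smul_eq_mul]
      _ = (v / d) * d := by
          rw [show Finset.Icc 1 v = Finset.Ioc 0 v from Finset.Icc_add_one_left_eq_Ioc 0 v, Nat.Ioc_filter_dvd_card_eq_div]
      _ ≤ v := Nat.div_mul_le_self v d
  calc ∑ d ∈ v.divisors, (∑ u ∈ Finset.Icc 1 v, if Nat.gcd u v = d then d else 0)
      ≤ ∑ d ∈ v.divisors, v := Finset.sum_le_sum h2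
    _ = v.divisors.card * v := by rw [Finset.sum_const, smul_eq_mul]
    _ = v * v.divisors.card := mul_comm _ _

lemma tau_sum_le (n : ℕ) (hn : 1 ≤ n) :
    (∑ v ∈ Finset.Icc 1 n, (v.divisors.card : ℝ)) ≤ n * (1 + Real.log n) := by
  have h1 : ∀ v ∈ Finset.Icc 1 n, v.divisors = (Finset.Icc 1 n).filter (fun d => d ∣ v) := by
    intro v hv
    simp only [Finset.mem_Icc] at hv
    ext d
    simp only [Nat.mem_divisors, Finset.mem_filter, Finset.mem_Icc]
    constructor
    · intro ⟨hd, _⟩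
      exact ⟨⟨Nat.pos_of_dvd_of_pos hd (by omega), le_trans (Nat.le_of_dvd (by omega) hd) hv.2⟩, hd⟩
    · intro ⟨_, hd⟩
      exact ⟨hd, by omega⟩
  have h2 : ∑ v ∈ Finset.Icc 1 n, (v.divisors.card : ℝ)
      = ∑ d ∈ Finset.Icc 1 n, (((Finset.Icc 1 n).filter (fun v => d ∣ v)).card : ℝ) := by
    have : ∀ v ∈ Finset.Icc 1 n, (v.divisors.card : ℝ)
        = ∑ d ∈ Finset.Icc 1 n, if d ∣ v then (1:ℝ) else 0 := by
      intro v hv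
      rw [h1 v hv, ← Finset.sum_filter, Finset.sum_const, nsmul_eq_mul, mul_one]
    rw [Finset.sum_congr rfl this, Finset.sum_comm]
    refine Finset.sum_congr rfl fun d hd => ?_
    rw [← Finset.sum_filter, Finset.sum_const, nsmul_eq_mul, mul_one]
  rw [h2]
  have h3 : ∑ d ∈ Finset.Icc 1 n, (((Finset.Icc 1 n).filter (fun v => d ∣ v)).card : ℝ)
      ≤ ∑ d ∈ Finset.Icc 1 n, (n : ℝ) / d := by
    refine Finset.sum_le_sum fun d hd => ?_
    rw [show Finset.Icc 1 n = Finset.Ioc 0 n from Finset.Icc_add_one_left_eq_Ioc 0 n, Nat.Ioc_filter_dvd_card_eq_div]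
    exact Nat.cast_div_le
  refine h3.trans ?_
  have h4 : ∑ d ∈ Finset.Icc 1 n, (n : ℝ) / d = n * ∑ d ∈ Finset.Icc 1 n, ((d : ℝ))⁻¹ := by
    rw [Finset.mul_sum]
    exact Finset.sum_congr rfl fun d _ => div_eq_mul_inv _ _
  rw [h4]
  have h5 : ∑ d ∈ Finset.Icc 1 n, ((d : ℝ))⁻¹ = (harmonic n : ℝ) := by
    rw [harmonic_eq_sum_Icc]
    push_cast
    rfl
  rw [h5]
  have := harmonic_le_one_add_log n
  have hn0 : (0:ℝ) ≤ n := by positivity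
  nlinarith [this]

lemma main_nat_bound (n : ℕ) (hn : 1 ≤ n) :
    ∑ u ∈ Finset.Icc 1 n, ∑ v ∈ Finset.Icc 1 n, (Nat.gcd u v : ℝ) / ((max u v : ℕ) : ℝ)
      ≤ 2 * n * (1 + Real.log n) := by
  set s : ℕ → ℕ → ℝ := fun u v => if u ≤ v then (Nat.gcd u v : ℝ) / v else 0 with hs
  have hsnn : ∀ u v, 0 ≤ s u v := by
    intro u v
    rw [hs]
    dsimp only
    split
    · positivity
    · exact le_rfl
  have hterm : ∀ u ∈ Finset.Icc 1 n, ∀ v ∈ Finset.Icc 1 n,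
      (Nat.gcd u v : ℝ) / ((max u v : ℕ) : ℝ) ≤ s u v + s v u := by
    intro u hu v hv
    rcases le_total u v with h | h
    · rw [max_eq_right h, hs]
      dsimp only
      rw [if_pos h]
      have := hsnn v u
      rw [hs] at this
      linarith [this]
    · rw [max_eq_left h, hs]
      dsimp only
      rw [if_pos h, Nat.gcd_comm v u]
      have h0 : (0:ℝ) ≤ if u ≤ v then (Nat.gcd u v : ℝ) / v else 0 := by
        split
        · positivity
        · exact le_rfl
      linarith
  have hsplit : ∑ u ∈ Finset.Icc 1 n, ∑ v ∈ Finset.Icc 1 n, (Nat.gcd u v : ℝ) / ((max u v : ℕ) : ℝ)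
      ≤ 2 * ∑ u ∈ Finset.Icc 1 n, ∑ v ∈ Finset.Icc 1 n, s u v := by
    calc ∑ u ∈ Finset.Icc 1 n, ∑ v ∈ Finset.Icc 1 n, (Nat.gcd u v : ℝ) / ((max u v : ℕ) : ℝ)
        ≤ ∑ u ∈ Finset.Icc 1 n, ∑ v ∈ Finset.Icc 1 n, (s u v + s v u) :=
          Finset.sum_le_sum fun u hu => Finset.sum_le_sum fun v hv => hterm u hu v hv
      _ = (∑ u ∈ Finset.Icc 1 n, ∑ v ∈ Finset.Icc 1 n, s u v)
          + ∑ u ∈ Finset.Icc 1 n, ∑ v ∈ Finset.Icc 1 n, s v u := by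
          rw [← Finset.sum_add_distrib]
          exact Finset.sum_congr rfl fun u _ => Finset.sum_add_distrib
      _ = 2 * ∑ u ∈ Finset.Icc 1 n, ∑ v ∈ Finset.Icc 1 n, s u v := by
          rw [Finset.sum_comm (f := fun u v => s v u)]
          ring
  refine hsplit.trans ?_
  have hinner : ∀ v ∈ Finset.Icc 1 n,
      ∑ u ∈ Finset.Icc 1 n, s u v ≤ (v.divisors.card : ℝ) := by
    intro v hv
    simp only [Finset.mem_Icc] at hv
    have hfil : (Finset.Icc 1 n).filter (fun u => u ≤ v) = Finset.Icc 1 v := by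
      ext u
      simp only [Finset.mem_filter, Finset.mem_Icc]
      omega
    have : ∑ u ∈ Finset.Icc 1 n, s u v = ∑ u ∈ Finset.Icc 1 v, (Nat.gcd u v : ℝ) / v := by
      rw [hs, ← Finset.sum_filter, hfil]
    rw [this]
    have hv0 : (0:ℝ) < v := by exact_mod_cast hv.1
    rw [← Finset.sum_div]
    rw [div_le_iff₀ hv0]
    have hcast : (∑ u ∈ Finset.Icc 1 v, (Nat.gcd u v : ℝ)) = ((∑ u ∈ Finset.Icc 1 v, Nat.gcd u v : ℕ) : ℝ) := by
      push_cast; rfl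
    rw [hcast]
    have := gcd_sum_le v hv.1
    calc ((∑ u ∈ Finset.Icc 1 v, Nat.gcd u v : ℕ) : ℝ) ≤ ((v * v.divisors.card : ℕ) : ℝ) := by
          exact_mod_cast this
      _ = (v.divisors.card : ℝ) * v := by push_cast; ring
  calc 2 * ∑ u ∈ Finset.Icc 1 n, ∑ v ∈ Finset.Icc 1 n, s u v
      = 2 * ∑ v ∈ Finset.Icc 1 n, ∑ u ∈ Finset.Icc 1 n, s u v := by rw [Finset.sum_comm]
    _ ≤ 2 * ∑ v ∈ Finset.Icc 1 n, (v.divisors.card : ℝ) := by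
        have := Finset.sum_le_sum hinner
        linarith
    _ ≤ 2 * (n * (1 + Real.log n)) := by
        have := tau_sum_le n hn
        linarith
    _ = 2 * n * (1 + Real.log n) := by ring

lemma count_le (a b : ℤ) (ha : 1 ≤ a) (hab : a ≤ b) :
    ∑ p ∈ (S a) ×ˢ (S b), ∑ q ∈ (S a) ×ˢ (S b), (if p.1 * p.2 = q.1 * q.2 then (1:ℝ) else 0)
      ≤ 16 * b * a.toNat * (1 + Real.log a.toNat) := by
  have hb : 1 ≤ b := le_trans ha hab
  set F : ℤ → ℤ → ℝ :=
    fun x x' => 2 * (b:ℝ) * (Int.gcd x x' : ℝ) / ((max x.natAbs x'.natAbs : ℕ) : ℝ) with hF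
  -- Step 1: rewrite as sum of solution counts
  have step1 : ∑ p ∈ (S a) ×ˢ (S b), ∑ q ∈ (S a) ×ˢ (S b),
      (if p.1 * p.2 = q.1 * q.2 then (1:ℝ) else 0)
      = ∑ x ∈ S a, ∑ x' ∈ S a,
          ((((S b) ×ˢ (S b)).filter (fun p => x * p.1 = x' * p.2)).card : ℝ) := by
    rw [Finset.sum_product]
    refine Finset.sum_congr rfl fun x hx => ?_
    have e1 : ∀ y : ℤ, ∑ q ∈ (S a) ×ˢ (S b), (if x * y = q.1 * q.2 then (1:ℝ) else 0)
        = ∑ x' ∈ S a, ∑ y' ∈ S b, (if x * y = x' * y' then (1:ℝ) else 0) :=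
      fun y => Finset.sum_product _ _ _
    rw [Finset.sum_congr rfl (fun y _ => e1 y), Finset.sum_comm]
    refine Finset.sum_congr rfl fun x' _ => ?_
    rw [← Finset.sum_boole]
    exact (Finset.sum_product (S b) (S b) (fun p => if x * p.1 = x' * p.2 then (1:ℝ) else 0)).symm
  rw [step1]
  -- Step 2: bound each count
  have step2 : ∑ x ∈ S a, ∑ x' ∈ S a,
      ((((S b) ×ˢ (S b)).filter (fun p => x * p.1 = x' * p.2)).card : ℝ)
      ≤ ∑ x ∈ S a, ∑ x' ∈ S a, F x x' := by
    refine Finset.sum_le_sum fun x hx => Finset.sum_le_sum fun x' hx' => ?_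
    simp only [S, Finset.mem_filter] at hx hx'
    exact sol_card_le_max b hb x x' hx.2 hx'.2
  refine step2.trans ?_
  -- Step 3: reduce to positive values
  have hFneg : ∀ x x', F (-x) x' = F x x' := by
    intro x x'
    rw [hF]
    simp only [Int.gcd, Int.natAbs_neg]
  have hFneg' : ∀ x x', F x (-x') = F x x' := by
    intro x x'
    rw [hF]
    simp only [Int.gcd, Int.natAbs_neg]
  have step3 : ∑ x ∈ S a, ∑ x' ∈ S a, F x x'
      = 4 * ∑ x ∈ Finset.Icc (1:ℤ) a, ∑ x' ∈ Finset.Icc (1:ℤ) a, F x x' := by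
    rw [sum_S_eq a _ (fun x => by
      refine Finset.sum_congr rfl fun x' _ => ?_
      exact hFneg x x')]
    have : ∀ x, ∑ x' ∈ S a, F x x' = 2 * ∑ x' ∈ Finset.Icc (1:ℤ) a, F x x' :=
      fun x => sum_S_eq a _ (fun x' => hFneg' x x')
    rw [Finset.sum_congr rfl (fun x _ => this x)]
    rw [← Finset.mul_sum]
    ring
  rw [step3]
  -- Step 4: convert to ℕ
  have hn1 : 1 ≤ a.toNat := by omega
  have step4 : ∑ x ∈ Finset.Icc (1:ℤ) a, ∑ x' ∈ Finset.Icc (1:ℤ) a, F x x'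
      = 2 * b * ∑ u ∈ Finset.Icc 1 a.toNat, ∑ v ∈ Finset.Icc 1 a.toNat,
          (Nat.gcd u v : ℝ) / ((max u v : ℕ) : ℝ) := by
    calc ∑ x ∈ Finset.Icc (1:ℤ) a, ∑ x' ∈ Finset.Icc (1:ℤ) a, F x x'
        = ∑ u ∈ Finset.Icc 1 a.toNat, ∑ x' ∈ Finset.Icc (1:ℤ) a, F (↑u) x' :=
          sum_Icc_int_nat a _
      _ = ∑ u ∈ Finset.Icc 1 a.toNat, ∑ v ∈ Finset.Icc 1 a.toNat, F (↑u) (↑v) :=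
          Finset.sum_congr rfl (fun u _ => sum_Icc_int_nat a _)
      _ = 2 * b * ∑ u ∈ Finset.Icc 1 a.toNat, ∑ v ∈ Finset.Icc 1 a.toNat,
          (Nat.gcd u v : ℝ) / ((max u v : ℕ) : ℝ) := by
          rw [Finset.mul_sum]
          refine Finset.sum_congr rfl fun u _ => ?_
          rw [Finset.mul_sum]
          refine Finset.sum_congr rfl fun v _ => ?_
          rw [hF]
          simp only [Int.gcd_natCast_natCast, Int.natAbs_natCast]
          ring
  rw [step4]
  have step5 := main_nat_bound a.toNat hn1
  have hbpos : (0:ℝ) < b := by exact_mod_cast hb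
  have hlog : (0:ℝ) ≤ 1 + Real.log a.toNat := by
    have : (0:ℝ) ≤ Real.log a.toNat := Real.log_nonneg (by exact_mod_cast hn1)
    linarith
  calc 4 * (2 * b * ∑ u ∈ Finset.Icc 1 a.toNat, ∑ v ∈ Finset.Icc 1 a.toNat,
          (Nat.gcd u v : ℝ) / ((max u v : ℕ) : ℝ))
      ≤ 4 * (2 * b * (2 * a.toNat * (1 + Real.log a.toNat))) := by
        have h8 : (0:ℝ) ≤ 2 * b := by linarith
        nlinarith [step5, h8]
    _ = 16 * b * a.toNat * (1 + Real.log a.toNat) := by ring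


theorem stmt6 :
    ∃ c > 0, ∀ X Y : ℝ, 3 / 2 ≤ X → X ≤ Y →
      ∫ α in (0 : ℝ)..1, ‖f X Y α‖ ^ 2 ≤ c * X * Y * Real.log X := by
  refine ⟨64, by norm_num, ?_⟩
  intro X Y hX hXY
  have ha : 1 ≤ ⌊X⌋ := by
    rw [Int.le_floor]
    push_cast
    linarith
  have hab : ⌊X⌋ ≤ ⌊Y⌋ := Int.floor_le_floor hXY
  rw [integral_sq_abs]
  refine (count_le ⌊X⌋ ⌊Y⌋ ha hab).trans ?_
  set B : ℝ := ((⌊Y⌋ : ℤ) : ℝ) with hBdef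
  set N : ℝ := ((⌊X⌋.toNat : ℕ) : ℝ) with hNdef
  have hXpos : (0:ℝ) < X := by linarith
  have hYpos : (0:ℝ) < Y := by linarith
  have hBY : B ≤ Y := Int.floor_le Y
  have hB0 : (0:ℝ) ≤ B := by
    rw [hBdef]
    exact_mod_cast (by omega : (0:ℤ) ≤ ⌊Y⌋)
  have hNX : N ≤ X := by
    rw [hNdef]
    have h1 : ((⌊X⌋.toNat : ℕ) : ℤ) = ⌊X⌋ := Int.toNat_of_nonneg (by omega)
    have h2 : ((⌊X⌋.toNat : ℕ) : ℝ) = ((⌊X⌋ : ℤ) : ℝ) := by exact_mod_cast h1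
    rw [h2]
    exact Int.floor_le X
  have hN1 : (1:ℝ) ≤ N := by
    rw [hNdef]
    exact_mod_cast (by omega : 1 ≤ ⌊X⌋.toNat)
  have hN0 : (0:ℝ) ≤ N := by linarith
  have hlogX : (1:ℝ)/3 ≤ Real.log X := by
    rw [Real.le_log_iff_exp_le hXpos]
    have h := Real.add_one_le_exp (-(1/3) : ℝ)
    have hexp : Real.exp (1/3) ≤ 3/2 := by
      have hpos : (0:ℝ) < Real.exp (-(1/3)) := Real.exp_pos _
      have : Real.exp (1/3) = (Real.exp (-(1/3)))⁻¹ := by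
        rw [← Real.exp_neg]; norm_num
      rw [this]
      rw [inv_le_comm₀ hpos (by norm_num)]
      linarith
    linarith
  have hL0 : (0:ℝ) ≤ 1 + Real.log N := by
    have : (0:ℝ) ≤ Real.log N := Real.log_nonneg hN1
    linarith
  have hL4 : 1 + Real.log N ≤ 4 * Real.log X := by
    have hmono : Real.log N ≤ Real.log X := Real.log_le_log (by linarith) hNX
    have h1 : (1:ℝ) ≤ 3 * Real.log X := by linarith
    linarith
  have hNL : (0:ℝ) ≤ N * (1 + Real.log N) := mul_nonneg hN0 hL0
  have s1 : B * (N * (1 + Real.log N)) ≤ Y * (N * (1 + Real.log N)) :=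
    mul_le_mul_of_nonneg_right hBY hNL
  have s2 : N * (1 + Real.log N) ≤ X * (1 + Real.log N) :=
    mul_le_mul_of_nonneg_right hNX hL0
  have s3 : X * (1 + Real.log N) ≤ X * (4 * Real.log X) :=
    mul_le_mul_of_nonneg_left hL4 hXpos.le
  have s4 : Y * (N * (1 + Real.log N)) ≤ Y * (X * (4 * Real.log X)) := by
    have := le_trans s2 s3
    exact mul_le_mul_of_nonneg_left this hYpos.le
  calc 16 * B * N * (1 + Real.log N)
      = 16 * (B * (N * (1 + Real.log N))) := by ring
    _ ≤ 16 * (Y * (X * (4 * Real.log X))) := by linarith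
    _ = 64 * X * Y * Real.log X := by ring
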